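/- arXiv:2011.00738 — 2 statements merged into one kernel-verified Lean document; each statement's English description precedes it below -/
import Mathlib

section
/- Let Θ ∈ ℂ^{K×I} with K ≤ I and each entry of Θ having modulus at most 1 (so that ‖Θ‖_F² ≤ KI). Then tr((ΘΘᴴ)⁻¹) ≥ K/I, with equality if and only if ΘΘᴴ = I·I_K (i.e., the rows of Θ are pairwise orthogonal with squared norm I). -/
open Matrix

set_option maxHeartbeats 1000000 in
/-- orthogonal unit-modulus training minimizes the LS MSE. -/
theorem stmt_9 {K I : ℕ} (hKI : K ≤ I) (Θ : Matrix (Fin K) (Fin I) ℂ)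
    (hmod : ∀ i j, ‖Θ i j‖ ≤ 1) (hinv : IsUnit (Θ * Θᴴ)) :
    (K : ℝ) / I ≤ (((Θ * Θᴴ)⁻¹).trace).re
      ∧ ((((Θ * Θᴴ)⁻¹).trace).re = (K : ℝ) / I ↔ Θ * Θᴴ = (I : ℂ) • 1) := by
  rcases Nat.eq_zero_or_pos K with hK | hKpos
  · subst hK
    have h0 : ((Θ * Θᴴ)⁻¹).trace = 0 := by
      simp [Matrix.trace]
    have h1 : Θ * Θᴴ = (I : ℂ) • 1 := by
      ext i _
      exact i.elim0
    rw [h0]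
    simp [h1]
  have hIpos : 0 < I := lt_of_lt_of_le hKpos hKI
  have hIR : (0:ℝ) < I := by exact_mod_cast hIpos
  set A := Θ * Θᴴ with hAdef
  have hA : A.IsHermitian := isHermitian_mul_conjTranspose_self Θ
  open scoped ComplexOrder in
  have hps : A.PosSemidef := posSemidef_self_mul_conjTranspose Θ
  set U : Matrix (Fin K) (Fin K) ℂ := (hA.eigenvectorUnitary : Matrix (Fin K) (Fin K) ℂ) with hU
  set lam := hA.eigenvalues with hlam
  have h2 : U * star U = 1 := Matrix.mem_unitaryGroup_iff.mp (hA.eigenvectorUnitary).2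
  have h3 : star U * U = 1 := Matrix.mem_unitaryGroup_iff'.mp (hA.eigenvectorUnitary).2
  -- eigenvalues are positive
  have hdet : A.det ≠ 0 := ((Matrix.isUnit_iff_isUnit_det A).mp hinv).ne_zero
  have hne : ∀ i, lam i ≠ 0 := by
    intro i hi
    apply hdet
    rw [hA.det_eq_prod_eigenvalues]
    exact Finset.prod_eq_zero (Finset.mem_univ i) (by simp [← hlam, hi])
  have hpos : ∀ i, 0 < lam i := fun i => lt_of_le_of_ne (hps.eigenvalues_nonneg i) (Ne.symm (hne i))
  -- spectral decomposition and trace of the inverse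
  have hspec : A = U * diagonal (fun i => ((lam i : ℝ) : ℂ)) * star U := hA.spectral_theorem
  set D := diagonal (fun i => ((lam i : ℝ) : ℂ)) with hD
  set Dinv := diagonal (fun i => (((lam i)⁻¹ : ℝ) : ℂ)) with hDinv
  have hDD : D * Dinv = 1 := by
    rw [hD, hDinv, diagonal_mul_diagonal]
    have : (fun i => ((lam i : ℝ) : ℂ) * (((lam i)⁻¹ : ℝ) : ℂ)) = fun _ => (1 : ℂ) := by
      funext i
      rw [← Complex.ofReal_mul, mul_inv_cancel₀ (hne i), Complex.ofReal_one]
    rw [this, diagonal_one]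
  set B : Matrix (Fin K) (Fin K) ℂ := U * Dinv * star U with hB
  have hkey : ∀ X : Matrix (Fin K) (Fin K) ℂ, star U * (U * X) = X := fun X => by
    rw [← Matrix.mul_assoc, h3, Matrix.one_mul]
  have hAB : A * B = 1 := by
    rw [hspec, hB]
    simp only [Matrix.mul_assoc]
    rw [hkey, ← Matrix.mul_assoc D Dinv, hDD, Matrix.one_mul, h2]
  have hAinv : A⁻¹ = B := inv_eq_right_inv hAB
  have htrB : B.trace = ((∑ i, (lam i)⁻¹ : ℝ) : ℂ) := by
    rw [hB, trace_mul_comm, ← Matrix.mul_assoc, h3, Matrix.one_mul, hDinv, trace_diagonal]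
    push_cast; ring
  have htrA : A.trace = ((∑ i, lam i : ℝ) : ℂ) := by
    rw [hspec, trace_mul_comm, ← Matrix.mul_assoc, h3, Matrix.one_mul, hD, trace_diagonal]
    push_cast; ring
  -- the sum of eigenvalues is at most K * I
  have htrA2 : A.trace = ∑ i, ∑ j, Θ i j * star (Θ i j) := by
    simp [hAdef, Matrix.trace, Matrix.mul_apply, Matrix.conjTranspose_apply, Matrix.diag]
  set t := ∑ i, (lam i)⁻¹ with ht
  set s := ∑ i, lam i with hs
  have hsum_le : s ≤ (K:ℝ) * I := by
    have hre : s = ∑ i : Fin K, ∑ j : Fin I, Complex.normSq (Θ i j) := by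
      have h := congrArg Complex.re (htrA.symm.trans htrA2)
      rw [Complex.ofReal_re] at h
      rw [h]
      simp [Complex.mul_conj, Complex.re_sum]
    rw [hre]
    calc ∑ i : Fin K, ∑ j : Fin I, Complex.normSq (Θ i j)
        ≤ ∑ _i : Fin K, ∑ _j : Fin I, (1:ℝ) := by
          refine Finset.sum_le_sum fun i _ => Finset.sum_le_sum fun j _ => ?_
          have hm := hmod i j
          have hn : Complex.normSq (Θ i j) = ‖Θ i j‖^2 := (Complex.sq_norm _).symm
          rw [hn]
          nlinarith [norm_nonneg (Θ i j)]
      _ = (K:ℝ) * I := by simp [mul_comm]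
  have hre_inv : ((A⁻¹).trace).re = t := by
    rw [hAinv, htrB, Complex.ofReal_re]
  -- tangent-line bound, multiplied through by I^2
  have hgap : ∀ i, 0 ≤ (I:ℝ)^2 * (lam i)⁻¹ - (2*(I:ℝ) - lam i) := by
    intro i
    nlinarith [sq_nonneg (lam i - I), hpos i, mul_inv_cancel₀ (hne i), hIR]
  have hsumgap : ∑ i, ((I:ℝ)^2 * (lam i)⁻¹ - (2*(I:ℝ) - lam i))
      = (I:ℝ)^2 * t - 2*(K:ℝ)*I + s := by
    simp only [Finset.sum_sub_distrib, Finset.sum_add_distrib, ← Finset.mul_sum,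
      Finset.sum_const, Finset.card_univ, Fintype.card_fin, nsmul_eq_mul, ← ht, ← hs]
    ring
  have hsg : 0 ≤ (I:ℝ)^2 * t - 2*(K:ℝ)*I + s :=
    hsumgap ▸ Finset.sum_nonneg fun i _ => hgap i
  have hmain : (K:ℝ)/I ≤ t := by
    rw [div_le_iff₀ hIR]
    nlinarith [hsg, hsum_le, hIR]
  refine ⟨hre_inv ▸ hmain, ?_⟩
  rw [hre_inv]
  constructor
  · intro hteq
    have hIt : (I:ℝ)^2 * t = (K:ℝ) * I := by
      rw [hteq]; field_simp
    have hzero : ∑ i, ((I:ℝ)^2 * (lam i)⁻¹ - (2*(I:ℝ) - lam i)) = 0 := by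
      rw [hsumgap, hIt]
      linarith [hsum_le, hsg, hIt ▸ hsg]
    have hlamI : ∀ i, lam i = I := by
      intro i
      have hgi0 := (Finset.sum_eq_zero_iff_of_nonneg (fun i _ => hgap i)).mp hzero i
        (Finset.mem_univ i)
      have hmu : (lam i)⁻¹ * lam i = 1 := inv_mul_cancel₀ (hne i)
      have h5 : (lam i - I)^2 = 0 := by
        linear_combination lam i * hgi0 - (I:ℝ)^2 * hmu
      have h6 : lam i - (I:ℝ) = 0 := by
        have := sq_eq_zero_iff.mp h5
        exact this
      linarith
    have hDI : D = (I:ℂ) • 1 := by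
      rw [hD]
      ext i j
      rcases eq_or_ne i j with h | h
      · subst h
        simp [Matrix.diagonal_apply_eq, Matrix.one_apply_eq, hlamI i]
      · simp [Matrix.diagonal_apply_ne _ h, Matrix.one_apply_ne h]
    rw [hspec, hDI, Matrix.mul_smul, Matrix.smul_mul, Matrix.mul_one, h2]
  · intro hEq
    have hIne : (I:ℂ) ≠ 0 := Nat.cast_ne_zero.mpr hIpos.ne'
    have hinv2 : A * ((I:ℂ)⁻¹ • 1) = 1 := by
      rw [hEq, Matrix.smul_mul, Matrix.mul_smul, Matrix.mul_one, smul_smul,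
        mul_inv_cancel₀ hIne, one_smul]
    have hAi : A⁻¹ = (I:ℂ)⁻¹ • (1 : Matrix (Fin K) (Fin K) ℂ) := inv_eq_right_inv hinv2
    rw [← hre_inv, hAi, Matrix.trace_smul, Matrix.trace_one]
    simp only [smul_eq_mul]
    have hc : ((I:ℂ)⁻¹ * (Fintype.card (Fin K) : ℂ)) = (((K:ℝ)/I : ℝ) : ℂ) := by
      push_cast [Fintype.card_fin]
      ring
    rw [hc, Complex.ofReal_re]
end

section
/- Let Θ₁ ∈ ℂ^{M₁×I} and ψ ∈ ℂ^{I} with |ψ_q| = 1 for all q, and suppose Θ₁Θ₁ᴴ = I·I_{M₁}, Θ₁·1 = 0, Θ₁·ψ = 0, and Θ₁·diag(ψᴴ)·Θ₁ᴴ = 0. Define Ω ∈ ℂ^{(2M₁+1)×I} whose q-th column is [ψ_q^*; ψ_q^*·θ^{(q)}; θ^{(q)}] where θ^{(q)} is the q-th column of Θ₁ and ψᴴ = [ψ_1^*,…,ψ_I^*]. Then ΩΩᴴ = I·I_{2M₁+1}. -/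
open Matrix

/-- the four orthogonality conditions imply ΩΩᴴ = I·Id (equations (24)–(28)). -/
theorem stmt_14 {M₁ I : ℕ} (Θ₁ : Matrix (Fin M₁) (Fin I) ℂ) (ψ : Fin I → ℂ)
    (hψ : ∀ q, ‖ψ q‖ = 1)
    (h1 : Θ₁ * Θ₁ᴴ = (I : ℂ) • 1)
    (h2 : Θ₁ *ᵥ (fun _ => 1) = 0)
    (h3 : Θ₁ *ᵥ ψ = 0)
    (h4 : Θ₁ * Matrix.diagonal (fun q => star (ψ q)) * Θ₁ᴴ = 0)
    (Ωm : Matrix (Unit ⊕ Fin M₁ ⊕ Fin M₁) (Fin I) ℂ)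
    (hΩ : ∀ q, (Ωm (Sum.inl ()) q = star (ψ q))
      ∧ (∀ m, Ωm (Sum.inr (Sum.inl m)) q = star (ψ q) * Θ₁ m q)
      ∧ (∀ m, Ωm (Sum.inr (Sum.inr m)) q = Θ₁ m q)) :
    Ωm * Ωmᴴ = (I : ℂ) • 1 := by
  have hA : ∀ q, Ωm (Sum.inl ()) q = star (ψ q) := fun q => (hΩ q).1
  have hB : ∀ q m, Ωm (Sum.inr (Sum.inl m)) q = star (ψ q) * Θ₁ m q := fun q => (hΩ q).2.1
  have hC : ∀ q m, Ωm (Sum.inr (Sum.inr m)) q = Θ₁ m q := fun q => (hΩ q).2.2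
  have hψ1 : ∀ q, (starRingEnd ℂ) (ψ q) * ψ q = 1 := by
    intro q
    rw [mul_comm, Complex.mul_conj]
    norm_cast
    rw [Complex.normSq_eq_norm_sq, hψ q]; norm_num
  have h1e : ∀ m m', ∑ q, Θ₁ m q * (starRingEnd ℂ) (Θ₁ m' q)
      = (I : ℂ) * (if m = m' then 1 else 0) := by
    intro m m'
    have := congrFun (congrFun h1 m) m'
    simpa [Matrix.mul_apply, Matrix.conjTranspose_apply, Matrix.one_apply,
      Complex.star_def] using this
  have h2e : ∀ m, ∑ q, Θ₁ m q = 0 := by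
    intro m
    have := congrFun h2 m
    simpa [Matrix.mulVec, dotProduct] using this
  have h3e : ∀ m, ∑ q, Θ₁ m q * ψ q = 0 := by
    intro m
    have := congrFun h3 m
    simpa [Matrix.mulVec, dotProduct] using this
  have h4e : ∀ m m', ∑ q, Θ₁ m q * ((starRingEnd ℂ) (ψ q) * (starRingEnd ℂ) (Θ₁ m' q)) = 0 := by
    intro m m'
    have h4' : Θ₁ * (Matrix.diagonal (fun q => star (ψ q)) * Θ₁ᴴ) = 0 := by
      rw [← Matrix.mul_assoc]; exact h4
    have := congrFun (congrFun h4' m) m'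
    simpa [Matrix.mul_apply, Matrix.diagonal_apply, Matrix.conjTranspose_apply,
      Complex.star_def, ite_mul, zero_mul, Finset.sum_ite_eq] using this
  ext i j
  rcases i with _ | i | i <;> rcases j with _ | j | j <;>
    simp only [Matrix.mul_apply, Matrix.conjTranspose_apply, Matrix.smul_apply,
      Matrix.one_apply, hA, hB, hC, smul_eq_mul, Complex.star_def, _root_.map_mul,
      Complex.conj_conj, Sum.inr.injEq, Sum.inl.injEq, reduceCtorEq, if_true, if_false,
      mul_zero, mul_one]
  · -- inl inl
    simp [hψ1]
  · -- inl, inr inl j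
    have key : ∀ q, (starRingEnd ℂ) (ψ q) * (ψ q * (starRingEnd ℂ) (Θ₁ j q))
        = (starRingEnd ℂ) (Θ₁ j q) := by
      intro q; rw [← mul_assoc, hψ1 q, one_mul]
    simp only [key]
    rw [← map_sum, h2e j, map_zero]
  · -- inl, inr inr j
    have key : ∀ q, (starRingEnd ℂ) (ψ q) * (starRingEnd ℂ) (Θ₁ j q)
        = (starRingEnd ℂ) (Θ₁ j q * ψ q) := by
      intro q; rw [_root_.map_mul]; ring
    simp only [key]
    rw [← map_sum, h3e j, map_zero]
  · -- inr inl i, inl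
    have key : ∀ q, (starRingEnd ℂ) (ψ q) * Θ₁ i q * ψ q = Θ₁ i q := by
      intro q
      rw [mul_comm ((starRingEnd ℂ) (ψ q)) (Θ₁ i q), mul_assoc, hψ1 q, mul_one]
    simp only [key]
    simp [h2e i]
  · -- inr inl, inr inl
    have key : ∀ q, (starRingEnd ℂ) (ψ q) * Θ₁ i q * (ψ q * (starRingEnd ℂ) (Θ₁ j q))
        = Θ₁ i q * (starRingEnd ℂ) (Θ₁ j q) := by
      intro q
      have : (starRingEnd ℂ) (ψ q) * Θ₁ i q * (ψ q * (starRingEnd ℂ) (Θ₁ j q))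
          = ((starRingEnd ℂ) (ψ q) * ψ q) * (Θ₁ i q * (starRingEnd ℂ) (Θ₁ j q)) := by ring
      rw [this, hψ1 q, one_mul]
    simp only [key]
    rw [h1e i j]
  · -- inr inl, inr inr
    have key : ∀ q, (starRingEnd ℂ) (ψ q) * Θ₁ i q * (starRingEnd ℂ) (Θ₁ j q)
        = Θ₁ i q * ((starRingEnd ℂ) (ψ q) * (starRingEnd ℂ) (Θ₁ j q)) := by
      intro q; ring
    simp only [key]
    rw [h4e i j]
  · -- inr inr, inl
    simp [h3e i]
  · -- inr inr, inr inl
    have key : ∀ q, Θ₁ i q * (ψ q * (starRingEnd ℂ) (Θ₁ j q))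
        = (starRingEnd ℂ) (Θ₁ j q * ((starRingEnd ℂ) (ψ q) * (starRingEnd ℂ) (Θ₁ i q))) := by
      intro q
      simp only [_root_.map_mul, Complex.conj_conj]
      ring
    simp only [key]
    rw [← map_sum, h4e j i, map_zero]
  · -- inr inr, inr inr
    rw [h1e i j]
end
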